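/- For 0 ≤ p < ∞ on a nonatomic probability space and α ∈ (0,1), the Value-at-Risk acceptance set A_α = {X ∈ L^p : P(X < 0) ≤ α} has interior equal to {X ∈ L^p : P(X ≤ 0) < α}. In particular, for S_T ∈ L^p_+, S_T is an interior point of A_α if and only if P(S_T = 0) < α. -/

import Mathlib

open MeasureTheory Filter Topology ENNReal

variable {Ω : Type*} [MeasureSpace Ω] [IsProbabilityMeasure (volume : Measure Ω)]

/-- The Value-at-Risk acceptance set at level α in Lᵖ. -/
def varAcc (p : ℝ≥0∞) (α : ℝ) : Set (Lp ℝ p (volume : Measure Ω)) :=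
  {f | volume {ω | f ω < 0} ≤ ENNReal.ofReal α}

private lemma half_step
    (hna : ∀ s : Set Ω, MeasurableSet s → 0 < volume s →
      ∃ t ⊆ s, MeasurableSet t ∧ 0 < volume t ∧ volume t < volume s)
    (s : Set Ω) (hs : MeasurableSet s) (h0 : 0 < volume s) :
    ∃ t ⊆ s, MeasurableSet t ∧ 0 < volume t ∧ volume t ≤ volume s / 2 := by
  obtain ⟨t, hts, htm, ht0, htlt⟩ := hna s hs h0
  by_cases hle : volume t ≤ volume s / 2
  · exact ⟨t, hts, htm, ht0, hle⟩
  · push_neg at hle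
    refine ⟨s \ t, Set.diff_subset, hs.diff htm, ?_, ?_⟩
    · rw [measure_diff (by exact hts) htm.nullMeasurableSet (measure_ne_top _ _)]
      exact tsub_pos_of_lt htlt
    · rw [measure_diff (by exact hts) htm.nullMeasurableSet (measure_ne_top _ _)]
      rw [tsub_le_iff_right]
      calc volume s = volume s / 2 + volume s / 2 := (ENNReal.add_halves _).symm
      _ ≤ volume s / 2 + volume t := add_le_add_right hle.le _


private lemma shrink_step
    (hna : ∀ s : Set Ω, MeasurableSet s → 0 < volume s →
      ∃ t ⊆ s, MeasurableSet t ∧ 0 < volume t ∧ volume t < volume s)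
    (s : Set Ω) (hs : MeasurableSet s) (h0 : 0 < volume s) {ε : ℝ≥0∞} (hε : 0 < ε) :
    ∃ t ⊆ s, MeasurableSet t ∧ 0 < volume t ∧ volume t < ε := by
  obtain ⟨n, hn⟩ := ENNReal.exists_inv_two_pow_lt hε.ne'
  suffices h : ∃ t ⊆ s, MeasurableSet t ∧ 0 < volume t ∧ volume t ≤ volume s * 2⁻¹ ^ n by
    obtain ⟨t, hts, htm, ht0, htle⟩ := h
    refine ⟨t, hts, htm, ht0, lt_of_le_of_lt htle ?_⟩
    calc volume s * 2⁻¹ ^ n ≤ 1 * 2⁻¹ ^ n := by gcongr; exact prob_le_one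
    _ = 2⁻¹ ^ n := one_mul _
    _ < ε := hn
  clear hn hε
  induction n with
  | zero => exact ⟨s, le_refl _, hs, h0, by simp⟩
  | succ k ih =>
    obtain ⟨t, hts, htm, ht0, htle⟩ := ih
    obtain ⟨u, hut, hum, hu0, hule⟩ := half_step hna t htm ht0
    refine ⟨u, hut.trans hts, hum, hu0, ?_⟩
    calc volume u ≤ volume t / 2 := hule
    _ ≤ volume s * 2⁻¹ ^ k / 2 := by gcongr
    _ = volume s * 2⁻¹ ^ (k + 1) := by
        rw [pow_succ, ENNReal.div_eq_inv_mul]; ring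

private lemma varAcc_fwd (p : ℝ≥0∞) [Fact (1 ≤ p)] (hp : p ≠ ∞)
    (α : ℝ) (f : Lp ℝ p (volume : Measure Ω))
    (hf : volume {ω | f ω ≤ 0} < ENNReal.ofReal α) :
    f ∈ interior (varAcc (Ω := Ω) p α) := by
  have hp0 : p ≠ 0 := (lt_of_lt_of_le zero_lt_one Fact.out).ne'
  have hpt : 0 < p.toReal := ENNReal.toReal_pos hp0 hp
  have hfm : Measurable (f : Ω → ℝ) := (Lp.stronglyMeasurable f).measurable
  -- find ε > 0 with volume {f < ε} < ofReal α
  obtain ⟨ε, hε, hεlt⟩ : ∃ ε : ℝ, 0 < ε ∧ volume {ω | f ω < ε} < ENNReal.ofReal α := by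
    set s : ℕ → Set Ω := fun n => {ω | f ω < 1 / (n + 1)} with hs
    have hmono : Antitone s := by
      intro m n hmn ω hω
      simp only [hs, Set.mem_setOf_eq] at hω ⊢
      refine lt_of_lt_of_le hω ?_
      have h1 : (0:ℝ) < m + 1 := by positivity
      have h2 : (m:ℝ) + 1 ≤ n + 1 := by exact_mod_cast Nat.succ_le_succ hmn
      exact one_div_le_one_div_of_le h1 h2
    have hiInter : ⋂ n, s n = {ω | f ω ≤ 0} := by
      ext ω
      simp only [Set.mem_iInter, hs, Set.mem_setOf_eq]
      constructor
      · intro h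
        by_contra hc
        push_neg at hc
        obtain ⟨n, hn⟩ := exists_nat_one_div_lt hc
        exact absurd (h n) (not_lt.mpr hn.le)
      · intro h n
        exact lt_of_le_of_lt h (by positivity)
    have htend : Tendsto (volume ∘ s) atTop (𝓝 (volume {ω | f ω ≤ 0})) := by
      rw [← hiInter]
      exact tendsto_measure_iInter_atTop
        (fun n => (hfm measurableSet_Iio).nullMeasurableSet) hmono
        ⟨0, measure_ne_top _ _⟩
    have := htend.eventually_lt_const hf
    obtain ⟨n, hn⟩ := this.exists
    exact ⟨1 / (n + 1), by positivity, hn⟩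
  -- constants
  set c : ℝ≥0∞ := ENNReal.ofReal α - volume {ω | f ω < ε} with hc
  have hc0 : 0 < c := tsub_pos_of_lt hεlt
  set k : ℝ≥0∞ := (ENNReal.ofReal ε)⁻¹ ^ p.toReal with hk
  have hεE : ENNReal.ofReal ε ≠ 0 := by simp [hε]
  have hk0 : k ≠ 0 := by
    apply (ENNReal.rpow_pos (ENNReal.inv_pos.mpr ENNReal.ofReal_ne_top) ?_).ne'
    exact ENNReal.inv_ne_top.mpr hεE
  have hktop : k ≠ ∞ := by
    refine (ENNReal.rpow_lt_top_of_nonneg hpt.le ?_).ne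
    exact ENNReal.inv_ne_top.mpr hεE
  set c' : ℝ≥0∞ := min c 1 / 2 with hc'
  have hmin0 : min c 1 ≠ 0 := (lt_min hc0 zero_lt_one).ne'
  have hmintop : min c 1 ≠ ∞ := ((min_le_right _ _).trans_lt ENNReal.one_lt_top).ne
  have hc'0 : c' ≠ 0 := (ENNReal.half_pos hmin0).ne'
  have hc'lt : c' < min c 1 := ENNReal.half_lt_self hmin0 hmintop
  have hc'top : c' ≠ ∞ := (hc'lt.trans_le (le_top.trans_eq rfl)).ne
  have hc'c : c' < c := hc'lt.trans_le (min_le_left _ _)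
  -- radius
  set x : ℝ≥0∞ := (c' / k) ^ (1 / p.toReal) with hx
  have hx0 : x ≠ 0 := by
    apply (ENNReal.rpow_pos (ENNReal.div_pos hc'0 hktop) ?_).ne'
    exact (ENNReal.div_lt_top hc'top hk0).ne
  have hxtop : x ≠ ∞ := by
    refine (ENNReal.rpow_lt_top_of_nonneg (by positivity) ?_).ne
    exact (ENNReal.div_lt_top hc'top hk0).ne
  have hxpow : k * x ^ p.toReal = c' := by
    rw [hx, ← ENNReal.rpow_mul, one_div, inv_mul_cancel₀ hpt.ne', ENNReal.rpow_one]
    rw [ENNReal.mul_div_cancel hk0 hktop]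
  set r : ℝ := x.toReal with hr
  have hr0 : 0 < r := ENNReal.toReal_pos hx0 hxtop
  have hxr : ENNReal.ofReal r = x := ENNReal.ofReal_toReal hxtop
  refine mem_interior.mpr ⟨Metric.ball f r, ?_, Metric.isOpen_ball, Metric.mem_ball_self hr0⟩
  intro g hg
  rw [Metric.mem_ball, dist_eq_norm] at hg
  -- Chebyshev
  have hcheb : volume {ω | ENNReal.ofReal ε ≤ ‖(g - f) ω‖₊} ≤ c' := by
    calc volume {ω | ENNReal.ofReal ε ≤ ‖(g - f) ω‖₊}
        ≤ (ENNReal.ofReal ε)⁻¹ ^ p.toReal * ENNReal.ofReal ‖g - f‖ ^ p.toReal :=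
          Lp.meas_ge_le_mul_pow_enorm (g - f) hp0 hp hεE
      _ ≤ k * x ^ p.toReal := by
          gcongr
          rw [← hxr]
          exact ENNReal.ofReal_le_ofReal hg.le
      _ = c' := hxpow
  -- a.e. inclusion
  have hincl : ({ω | g ω < 0} : Set Ω) ≤ᵐ[volume]
      (({ω | f ω < ε} ∪ {ω | ENNReal.ofReal ε ≤ ‖(g - f) ω‖₊} : Set Ω)) := by
    filter_upwards [Lp.coeFn_sub g f] with ω hω hg0
    replace hg0 : (g : Ω → ℝ) ω < 0 := hg0
    by_cases hfε : f ω < ε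
    · exact Or.inl hfε
    · refine Or.inr ?_
      push_neg at hfε
      show ENNReal.ofReal ε ≤ (‖(g - f) ω‖₊ : ℝ≥0∞)
      rw [← enorm_eq_nnnorm, ← ofReal_norm_eq_enorm]
      apply ENNReal.ofReal_le_ofReal
      rw [hω]
      simp only [Pi.sub_apply, Real.norm_eq_abs]
      rw [abs_sub_comm]
      calc ε ≤ f ω - g ω := by linarith
      _ ≤ |f ω - g ω| := le_abs_self _
  show volume {ω | g ω < 0} ≤ ENNReal.ofReal α
  calc volume {ω | g ω < 0}
      ≤ volume ({ω | f ω < ε} ∪ {ω | ENNReal.ofReal ε ≤ ‖(g - f) ω‖₊}) :=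
        measure_mono_ae hincl
    _ ≤ volume {ω | f ω < ε} + volume {ω | ENNReal.ofReal ε ≤ ‖(g - f) ω‖₊} :=
        measure_union_le _ _
    _ ≤ volume {ω | f ω < ε} + c' := by gcongr
    _ ≤ volume {ω | f ω < ε} + c := add_le_add_right hc'c.le _
    _ = ENNReal.ofReal α := add_tsub_cancel_of_le hεlt.le

private lemma varAcc_rev (p : ℝ≥0∞) [Fact (1 ≤ p)] (hp : p ≠ ∞)
    (hna : ∀ s : Set Ω, MeasurableSet s → 0 < volume s →
      ∃ t ⊆ s, MeasurableSet t ∧ 0 < volume t ∧ volume t < volume s)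
    (α : ℝ) (hα : α ∈ Set.Ioo (0 : ℝ) 1) (f : Lp ℝ p (volume : Measure Ω))
    (hf : f ∈ interior (varAcc (Ω := Ω) p α)) :
    volume {ω | f ω ≤ 0} < ENNReal.ofReal α := by
  have hp0 : p ≠ 0 := (lt_of_lt_of_le zero_lt_one Fact.out).ne'
  have hpt : 0 < p.toReal := ENNReal.toReal_pos hp0 hp
  have hfm : Measurable (f : Ω → ℝ) := (Lp.stronglyMeasurable f).measurable
  by_contra hcon
  push_neg at hcon
  obtain ⟨r, hr0, hball⟩ := Metric.mem_nhds_iff.mp (mem_interior_iff_mem_nhds.mp hf)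
  by_cases hpos : volume {ω | 0 < f ω} = 0
  · -- f ≤ 0 a.e.
    have h1 : volume {ω | f ω ≤ 0} = 1 := by
      have hcompl : {ω | f ω ≤ 0} = {ω | 0 < f ω}ᶜ := by
        ext ω; simp [not_lt]
      rw [hcompl, measure_compl (measurableSet_lt measurable_const hfm) (measure_ne_top _ _), hpos,
        measure_univ, tsub_zero]
    set c₁ := indicatorConstLp p MeasurableSet.univ (measure_ne_top (volume : Measure Ω) Set.univ) (r / 2) with hc₁
    set g := f - c₁ with hgdef
    have hgball : g ∈ Metric.ball f r := by
      rw [Metric.mem_ball, dist_eq_norm]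
      have : g - f = -c₁ := by rw [hgdef]; abel
      rw [this, norm_neg, norm_indicatorConstLp hp0 hp, probReal_univ]
      simp only [ENNReal.toReal_one, Real.one_rpow, mul_one, Real.norm_eq_abs]
      rw [abs_of_pos (by linarith)]
      linarith
    have hg : volume {ω | g ω < 0} ≤ ENNReal.ofReal α := hball hgball
    have hincl : ({ω | f ω ≤ 0} : Set Ω) ≤ᵐ[volume] ({ω | g ω < 0} : Set Ω) := by
      filter_upwards [Lp.coeFn_sub f c₁, indicatorConstLp_coeFn_mem (p := p) (μ := (volume : Measure Ω)) (s := Set.univ)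
        (hs := MeasurableSet.univ) (hμs := measure_ne_top _ _) (c := r / 2)]
        with ω hω h₁ hmem
      replace hmem : (f : Ω → ℝ) ω ≤ 0 := hmem
      show (g : Ω → ℝ) ω < 0
      rw [hgdef, hω]
      simp only [Pi.sub_apply, hc₁, h₁ (Set.mem_univ ω)]
      linarith
    have := (measure_mono_ae hincl).trans hg
    rw [h1] at this
    exact absurd (this.trans_lt (ENNReal.ofReal_lt_one.mpr hα.2)) (lt_irrefl _)
  · -- there is mass above 0
    replace hpos : 0 < volume {ω | 0 < f ω} := pos_iff_ne_zero.mpr hpos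
    obtain ⟨n, hn⟩ : ∃ n : ℕ, 0 < volume {ω | 0 < f ω ∧ f ω < n} := by
      by_contra hall
      push_neg at hall
      have hunion : {ω | 0 < f ω} = ⋃ n : ℕ, {ω | 0 < f ω ∧ f ω < n} := by
        ext ω
        simp only [Set.mem_setOf_eq, Set.mem_iUnion]
        constructor
        · intro h
          obtain ⟨n, hn⟩ := exists_nat_gt ((f : Ω → ℝ) ω)
          exact ⟨n, h, hn⟩
        · rintro ⟨n, h, -⟩; exact h
      rw [hunion] at hpos
      have : volume (⋃ n : ℕ, {ω | 0 < f ω ∧ f ω < n}) = 0 :=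
        measure_iUnion_null fun n => le_zero_iff.mp (hall n)
      exact absurd this hpos.ne'
    set s : Set Ω := {ω | 0 < f ω ∧ f ω < n} with hsdef
    have hsm : MeasurableSet s := by
      have : s = {ω | 0 < f ω} ∩ {ω | f ω < n} := by ext ω; simp [hsdef]
      rw [this]
      exact (hfm measurableSet_Ioi).inter (hfm measurableSet_Iio)
    have hε₀ : (0:ℝ≥0∞) < ENNReal.ofReal ((r / (2 * (n + 1))) ^ p.toReal) := by
      apply ENNReal.ofReal_pos.mpr
      apply Real.rpow_pos_of_pos
      positivity
    obtain ⟨t, hts, htm, ht0, htε⟩ := shrink_step hna s hsm hn hε₀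
    set c₁ := indicatorConstLp p MeasurableSet.univ (measure_ne_top (volume : Measure Ω) Set.univ) (r / 4) with hc₁
    set c₂ := indicatorConstLp p htm (measure_ne_top (volume : Measure Ω) t) ((n : ℝ) + 1) with hc₂
    set g := f - c₁ - c₂ with hgdef
    have hgball : g ∈ Metric.ball f r := by
      rw [Metric.mem_ball, dist_eq_norm]
      have hgf : g - f = -(c₁ + c₂) := by rw [hgdef]; abel
      rw [hgf, norm_neg]
      have h₁ : ‖c₁‖ = r / 4 := by
        rw [hc₁, norm_indicatorConstLp hp0 hp, probReal_univ]
        simp only [ENNReal.toReal_one, Real.one_rpow, mul_one, Real.norm_eq_abs]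
        exact abs_of_pos (by linarith)
      have h₂ : ‖c₂‖ < r / 2 := by
        rw [hc₂, norm_indicatorConstLp hp0 hp]
        have hvt : (volume t).toReal < (r / (2 * (n + 1))) ^ p.toReal :=
          ENNReal.toReal_lt_of_lt_ofReal htε
        have hroot : (volume t).toReal ^ (1 / p.toReal) < r / (2 * (n + 1)) := by
          have hb : (0:ℝ) < r / (2 * (n + 1)) := by positivity
          calc (volume t).toReal ^ (1 / p.toReal)
              < ((r / (2 * (n + 1))) ^ p.toReal) ^ (1 / p.toReal) :=
                Real.rpow_lt_rpow ENNReal.toReal_nonneg hvt (by positivity)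
            _ = r / (2 * (n + 1)) := by
                rw [← Real.rpow_mul hb.le, mul_one_div_cancel hpt.ne', Real.rpow_one]
        have hnorm : ‖(n : ℝ) + 1‖ = (n : ℝ) + 1 := by
          rw [Real.norm_eq_abs]; exact abs_of_pos (by positivity)
        rw [hnorm]
        calc ((n : ℝ) + 1) * (volume t).toReal ^ (1 / p.toReal)
            < ((n : ℝ) + 1) * (r / (2 * (n + 1))) := by
              apply mul_lt_mul_of_pos_left hroot (by positivity)
          _ = r / 2 := by field_simp
      calc ‖c₁ + c₂‖ ≤ ‖c₁‖ + ‖c₂‖ := norm_add_le _ _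
        _ < r / 4 + r / 2 := by rw [h₁]; linarith
        _ < r := by linarith
    have hg : volume {ω | g ω < 0} ≤ ENNReal.ofReal α := hball hgball
    have hincl : (({ω | f ω ≤ 0} ∪ t) : Set Ω) ≤ᵐ[volume] ({ω | g ω < 0} : Set Ω) := by
      filter_upwards [Lp.coeFn_sub (f - c₁) c₂, Lp.coeFn_sub f c₁,
        indicatorConstLp_coeFn_mem (p := p) (μ := (volume : Measure Ω)) (s := Set.univ)
          (hs := MeasurableSet.univ) (hμs := measure_ne_top _ _) (c := r / 4),
        indicatorConstLp_coeFn (p := p) (μ := (volume : Measure Ω)) (hs := htm) (hμs := measure_ne_top _ _)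
          (c := (n : ℝ) + 1)] with ω h₁ h₂ h₃ h₄ hmem
      show (g : Ω → ℝ) ω < 0
      have hgval : (g : Ω → ℝ) ω = (f : Ω → ℝ) ω - (r / 4) - (c₂ : Ω → ℝ) ω := by
        rw [hgdef]
        rw [h₁]
        simp only [Pi.sub_apply]
        rw [h₂]
        simp only [Pi.sub_apply, hc₁, h₃ (Set.mem_univ ω)]
      rcases hmem with hmem | hmem
      · replace hmem : (f : Ω → ℝ) ω ≤ 0 := hmem
        have hc₂nn : 0 ≤ (c₂ : Ω → ℝ) ω := by
          rw [h₄]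
          exact Set.indicator_nonneg (fun _ _ => by positivity) ω
        rw [hgval]; linarith
      · have hfn : (f : Ω → ℝ) ω < n := (hts hmem).2
        have hc₂val : (c₂ : Ω → ℝ) ω = (n : ℝ) + 1 := by
          rw [h₄, Set.indicator_of_mem hmem]
        rw [hgval, hc₂val]; linarith
    have hdisj : Disjoint ({ω | f ω ≤ 0} : Set Ω) t := by
      rw [Set.disjoint_left]
      intro ω hω hωt
      exact absurd (hts hωt).1 (not_lt.mpr hω)
    have hsum : volume ({ω | f ω ≤ 0} ∪ t) = volume {ω | f ω ≤ 0} + volume t :=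
      measure_union hdisj htm
    have hbig : ENNReal.ofReal α < volume {ω | g ω < 0} := by
      calc ENNReal.ofReal α < ENNReal.ofReal α + volume t :=
            ENNReal.lt_add_right ENNReal.ofReal_ne_top ht0.ne'
        _ ≤ volume {ω | f ω ≤ 0} + volume t := add_le_add_left hcon _
        _ = volume ({ω | f ω ≤ 0} ∪ t) := hsum.symm
        _ ≤ volume {ω | g ω < 0} := measure_mono_ae hincl
    exact absurd hg (not_le.mpr hbig)

/-- on a nonatomic probability space, the interior of the VaR
acceptance set A_α = {X : P(X < 0) ≤ α} in Lᵖ (p < ∞) is {X : P(X ≤ 0) < α};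
in particular, a positive S_T is interior to A_α iff P(S_T = 0) < α. -/
theorem interior_varAcc (p : ℝ≥0∞) [Fact (1 ≤ p)] (hp : p ≠ ∞)
    (hna : ∀ s : Set Ω, MeasurableSet s → 0 < volume s →
      ∃ t ⊆ s, MeasurableSet t ∧ 0 < volume t ∧ volume t < volume s)
    (α : ℝ) (hα : α ∈ Set.Ioo (0 : ℝ) 1) :
    interior (varAcc (Ω := Ω) p α) =
      {f : Lp ℝ p (volume : Measure Ω) | volume {ω | f ω ≤ 0} < ENNReal.ofReal α} ∧
    ∀ ST : Lp ℝ p (volume : Measure Ω), 0 ≤ ST →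
      (ST ∈ interior (varAcc (Ω := Ω) p α) ↔
        volume {ω | ST ω = 0} < ENNReal.ofReal α) := by
  have hmain : interior (varAcc (Ω := Ω) p α) =
      {f : Lp ℝ p (volume : Measure Ω) | volume {ω | f ω ≤ 0} < ENNReal.ofReal α} := by
    ext f
    exact ⟨fun hf => varAcc_rev p hp hna α hα f hf, fun hf => varAcc_fwd p hp α f hf⟩
  refine ⟨hmain, fun ST hST => ?_⟩
  have hEq : volume {ω | ST ω ≤ 0} = volume {ω | ST ω = 0} := by
    apply measure_congr
    rw [Filter.eventuallyEq_set]
    filter_upwards [(Lp.coeFn_nonneg ST).mpr hST] with ω hω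
    have hω' : (0 : ℝ) ≤ (ST : Ω → ℝ) ω := hω
    exact ⟨fun h => le_antisymm h hω', fun h => le_of_eq h⟩
  rw [hmain]
  simp only [Set.mem_setOf_eq, hEq]
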